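/- Let Γ ≠ {±1} be a discrete subgroup of SL(2,ℝ) in which the only elements fixing ∞ are ±1, and suppose there are real numbers α ≤ β with I(g) ⊆ {z ∈ ℍ : α ≤ Re z ≤ β} for every g ∈ Γ \ {±1}. Choose α' < α and β' > β, and form λ, t_λ, W and Γ_W as in the context. Then the isometric spheres of Γ_W contributing non-trivially to the boundary of W coincide with the relevant isometric spheres of Γ: for h ∈ Γ_W with h·∞ ≠ ∞, the set I(h) ∩ ∂W contains more than one point (∂W denoting the frontier of W in ℍ) if and only if I(h) = I(g) for some g ∈ Γ \ {±1} whose isometric sphere I(g) is relevant. -/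

import Mathlib

open Complex Matrix Filter

noncomputable section

abbrev SL2R := Matrix.SpecialLinearGroup (Fin 2) ℝ

/-- The upper half-plane, as a subset of `ℂ`. -/
def UH : Set ℂ := {z : ℂ | 0 < z.im}

/-- Möbius action of `SL(2,ℝ)` on `ℂ`. -/
def moeb (g : SL2R) (z : ℂ) : ℂ :=
  ((g 0 0 : ℂ) * z + (g 0 1 : ℂ)) / ((g 1 0 : ℂ) * z + (g 1 1 : ℂ))

/-- The isometric sphere of `g` (requires `g 1 0 ≠ 0` to be meaningful). -/
def isoSphere (g : SL2R) : Set ℂ :=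
  {z ∈ UH | ‖(g 1 0 : ℂ) * z + (g 1 1 : ℂ)‖ = 1}

/-- The interior of the isometric sphere of `g`. -/
def isoInt (g : SL2R) : Set ℂ :=
  {z ∈ UH | ‖(g 1 0 : ℂ) * z + (g 1 1 : ℂ)‖ < 1}

/-- The exterior of the isometric sphere of `g`. -/
def isoExt (g : SL2R) : Set ℂ :=
  {z ∈ UH | 1 < ‖(g 1 0 : ℂ) * z + (g 1 1 : ℂ)‖}

/-- `g = 1` or `g = -1` (stated at the matrix level). -/
def IsPMOne (g : SL2R) : Prop :=
  (g : Matrix (Fin 2) (Fin 2) ℝ) = 1 ∨ (g : Matrix (Fin 2) (Fin 2) ℝ) = -1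

/-- Discreteness of a subgroup of `SL(2,ℝ)`: every element is isolated
(entrywise, which is equivalent to discreteness in the matrix topology). -/
def IsDiscreteSubgroup (Γ : Subgroup SL2R) : Prop :=
  ∀ g ∈ Γ, ∃ ε > (0 : ℝ), ∀ h ∈ Γ,
    (∀ i j, |(h : Matrix (Fin 2) (Fin 2) ℝ) i j - (g : Matrix (Fin 2) (Fin 2) ℝ) i j| < ε) → h = g

/-- The parabolic translation `t_λ = [[1,λ],[0,1]]` as an element of `SL(2,ℝ)`. -/
def tMat (l : ℝ) : SL2R := ⟨!![1, l; 0, 1], by norm_num [Matrix.det_fin_two_of]⟩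

/-- The common exterior `K` of all isometric spheres of `Γ`. -/
def commonExt (Γ : Subgroup SL2R) : Set ℂ :=
  ⋂ g ∈ {g : SL2R | g ∈ Γ ∧ ¬ IsPMOne g}, isoExt g

/-- An isometric sphere is relevant if it meets the frontier (in `ℍ`) of the
common exterior in more than one point. -/
def IsRelevant (Γ : Subgroup SL2R) (g : SL2R) : Prop :=
  (isoSphere g ∩ (frontier (commonExt Γ) ∩ UH)).Nontrivial

/-- The summit `-d/c + i/|c|` of the isometric sphere of `g`. -/
def summit (g : SL2R) : ℂ :=
  ((-(g 1 1) / g 1 0 : ℝ) : ℂ) + ((1 / |g 1 0| : ℝ) : ℂ) * Complex.I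

-- basic entry lemmas
@[simp] lemma tMat_00 (l : ℝ) : tMat l 0 0 = 1 := rfl
@[simp] lemma tMat_01 (l : ℝ) : tMat l 0 1 = l := rfl
@[simp] lemma tMat_10 (l : ℝ) : tMat l 1 0 = 0 := rfl
@[simp] lemma tMat_11 (l : ℝ) : tMat l 1 1 = 1 := rfl

lemma det_rel (g : SL2R) : g 0 0 * g 1 1 - g 0 1 * g 1 0 = 1 := by
  have := g.2
  rwa [Matrix.det_fin_two] at this

@[simp] lemma mul_apply' (g h : SL2R) (i j : Fin 2) :
    (g * h) i j = g i 0 * h 0 j + g i 1 * h 1 j := by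
  show ((g * h : SL2R) : Matrix (Fin 2) (Fin 2) ℝ) i j = _
  rw [Matrix.SpecialLinearGroup.coe_mul, Matrix.mul_apply, Fin.sum_univ_two]

lemma tMat_mul (l l' : ℝ) : tMat l * tMat l' = tMat (l + l') := by
  apply Subtype.ext
  ext i j
  fin_cases i <;> fin_cases j <;>
    simp [mul_apply', add_comm]

lemma tMat_zero : tMat 0 = 1 := by
  apply Subtype.ext
  ext i j
  fin_cases i <;> fin_cases j <;> simp [tMat, Matrix.one_fin_two]

lemma tMat_inv (l : ℝ) : (tMat l)⁻¹ = tMat (-l) := by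
  rw [inv_eq_iff_mul_eq_one, tMat_mul, add_neg_cancel, tMat_zero]

-- J cocycle function
def Jc (g : SL2R) (z : ℂ) : ℂ := (g 1 0 : ℂ) * z + (g 1 1 : ℂ)

lemma isoSphere_eq (g : SL2R) : isoSphere g = {z ∈ UH | ‖Jc g z‖ = 1} := rfl

lemma Jc_ne_zero (g : SL2R) {z : ℂ} (hz : 0 < z.im) : Jc g z ≠ 0 := by
  intro h
  rcases eq_or_ne (g 1 0) 0 with hc | hc
  · have hd : g 1 1 ≠ 0 := by
      intro hd
      have := det_rel g
      rw [hc, hd] at this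
      simp at this
    simp [Jc, hc] at h
    exact hd (by exact_mod_cast h)
  · have : (Jc g z).im = g 1 0 * z.im := by
      simp [Jc]
    rw [h] at this
    simp at this
    rcases this with h1 | h1
    · exact hc h1
    · exact absurd h1 (ne_of_gt hz)

lemma moeb_im (g : SL2R) {z : ℂ} (hz : 0 < z.im) :
    (moeb g z).im = z.im / Complex.normSq (Jc g z) := by
  have hJ : Jc g z ≠ 0 := Jc_ne_zero g hz
  have hN : Complex.normSq (Jc g z) ≠ 0 := by
    simpa [Complex.normSq_eq_zero] using hJ
  have hdet := det_rel g
  have h1 : ((g 0 0 : ℂ) * z + g 0 1).im = g 0 0 * z.im := by simp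
  have h2 : ((g 0 0 : ℂ) * z + g 0 1).re = g 0 0 * z.re + g 0 1 := by simp
  have h3 : ((g 1 0 : ℂ) * z + g 1 1).im = g 1 0 * z.im := by simp
  have h4 : ((g 1 0 : ℂ) * z + g 1 1).re = g 1 0 * z.re + g 1 1 := by simp
  have hD : Jc g z = (g 1 0 : ℂ) * z + g 1 1 := rfl
  rw [moeb, Complex.div_im, h1, h2, h3, h4, ← hD]
  field_simp
  linear_combination hdet

lemma moeb_mem_UH (g : SL2R) {z : ℂ} (hz : 0 < z.im) : 0 < (moeb g z).im := by
  rw [moeb_im g hz]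
  have hN : 0 < Complex.normSq (Jc g z) := Complex.normSq_pos.mpr (Jc_ne_zero g hz)
  positivity

lemma Jc_cocycle (g u : SL2R) {z : ℂ} (hz : 0 < z.im) :
    Jc (g * u) z = Jc g (moeb u z) * Jc u z := by
  have hJ : Jc u z ≠ 0 := Jc_ne_zero u hz
  rw [Jc, Jc, Jc, moeb, mul_apply', mul_apply']
  have hJ' : (u 1 0 : ℂ) * z + (u 1 1 : ℂ) ≠ 0 := hJ
  simp only [add_mul, mul_assoc, div_mul_cancel₀ _ hJ']
  push_cast
  ring

lemma moeb_mul (g u : SL2R) {z : ℂ} (hz : 0 < z.im) :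
    moeb (g * u) z = moeb g (moeb u z) := by
  have hJu : ((u 1 0 : ℂ) * z + (u 1 1 : ℂ)) ≠ 0 := Jc_ne_zero u hz
  have hJg : ((g 1 0 : ℂ) * (moeb u z) + (g 1 1 : ℂ)) ≠ 0 := Jc_ne_zero g (moeb_mem_UH u hz)
  have hJgu : ((g * u) 1 0 : ℂ) * z + ((g * u) 1 1 : ℂ) ≠ 0 := Jc_ne_zero (g * u) hz
  rw [moeb, moeb, moeb] at *
  rw [div_eq_div_iff hJgu hJg]
  simp only [mul_apply'] at *
  rw [mul_div_assoc', mul_div_assoc', div_add' _ _ _ hJu, div_add' _ _ _ hJu, mul_div_assoc',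
    div_mul_eq_mul_div, div_left_inj' hJu]
  push_cast
  ring

-- IsPMOne utilities
def negOne : SL2R := ⟨-1, by norm_num [Matrix.det_fin_two, Matrix.one_fin_two]⟩

lemma IsPMOne.cases {s : SL2R} (hs : IsPMOne s) : s = 1 ∨ s = negOne := by
  rcases hs with h | h
  · left; exact Subtype.ext h
  · right; exact Subtype.ext h

lemma isPMOne_one : IsPMOne (1 : SL2R) := Or.inl rfl

lemma isPMOne_negOne : IsPMOne negOne := Or.inr rfl

lemma negOne_mul_negOne : negOne * negOne = 1 := by
  apply Subtype.ext
  show ((negOne * negOne : SL2R) : Matrix (Fin 2) (Fin 2) ℝ) = 1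
  rw [Matrix.SpecialLinearGroup.coe_mul]
  show (-1 : Matrix (Fin 2) (Fin 2) ℝ) * (-1) = 1
  simp

lemma IsPMOne.central {s : SL2R} (hs : IsPMOne s) (y : SL2R) : s * y = y * s := by
  rcases hs.cases with rfl | rfl
  · simp
  · apply Subtype.ext
    show ((negOne * y : SL2R) : Matrix (Fin 2) (Fin 2) ℝ) = ((y * negOne : SL2R) : _)
    rw [Matrix.SpecialLinearGroup.coe_mul, Matrix.SpecialLinearGroup.coe_mul]
    show (-1 : Matrix (Fin 2) (Fin 2) ℝ) * y = y * (-1)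
    simp

lemma IsPMOne.mul {s s' : SL2R} (hs : IsPMOne s) (hs' : IsPMOne s') : IsPMOne (s * s') := by
  rcases hs.cases with rfl | rfl <;> rcases hs'.cases with rfl | rfl
  · simpa using isPMOne_one
  · simpa using isPMOne_negOne
  · simpa using isPMOne_negOne
  · rw [negOne_mul_negOne]; exact isPMOne_one

lemma IsPMOne.inv {s : SL2R} (hs : IsPMOne s) : IsPMOne s⁻¹ := by
  rcases hs.cases with rfl | rfl
  · simpa using isPMOne_one
  · rw [inv_eq_iff_mul_eq_one.mpr negOne_mul_negOne]; exact isPMOne_negOne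

lemma not_isPMOne_inv {g : SL2R} (hg : ¬ IsPMOne g) : ¬ IsPMOne g⁻¹ := by
  intro h
  exact hg (by simpa using h.inv)

lemma Jc_pm {s : SL2R} (hs : IsPMOne s) (y : SL2R) (z : ℂ) :
    ‖Jc (s * y) z‖ = ‖Jc y z‖ := by
  rcases hs.cases with rfl | rfl
  · simp
  · have h10 : (negOne * y) 1 0 = -(y 1 0) := by
      rw [_root_.mul_apply']; simp [negOne]
    have h11 : (negOne * y) 1 1 = -(y 1 1) := by
      rw [_root_.mul_apply']; simp [negOne]
    rw [Jc, Jc, h10, h11]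
    rw [show ((-(y 1 0) : ℝ) : ℂ) * z + ((-(y 1 1) : ℝ) : ℂ) = -((y 1 0 : ℂ) * z + (y 1 1 : ℂ)) by push_cast; ring,
      norm_neg]

lemma pm_entry_10 {s : SL2R} (hs : IsPMOne s) (y : SL2R) :
    (s * y) 1 0 = y 1 0 ∨ (s * y) 1 0 = -(y 1 0) := by
  rcases hs.cases with rfl | rfl
  · left; simp
  · right; rw [_root_.mul_apply']; simp [negOne]

lemma Jc_mul_tMat (u : SL2R) (x : ℝ) (z : ℂ) : Jc (u * tMat x) z = Jc u (z + x) := by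
  rw [Jc, Jc]
  have h10 : (u * tMat x) 1 0 = u 1 0 := by simp [mul_apply']
  have h11 : (u * tMat x) 1 1 = u 1 0 * x + u 1 1 := by simp [mul_apply']
  rw [h10, h11]
  push_cast
  ring

lemma Jc_tMat_mul (u : SL2R) (x : ℝ) (z : ℂ) : Jc (tMat x * u) z = Jc u z := by
  rw [Jc, Jc]
  have h10 : (tMat x * u) 1 0 = u 1 0 := by simp [mul_apply']
  have h11 : (tMat x * u) 1 1 = u 1 1 := by simp [mul_apply']
  rw [h10, h11]

-- letters and words
def letter (lam : ℝ) (m : ℤ) (g : SL2R) : SL2R := tMat (m * lam) * g * tMat (-(m * lam))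

lemma Jc_letter (lam : ℝ) (m : ℤ) (g : SL2R) (z : ℂ) :
    Jc (letter lam m g) z = Jc g (z - m * lam) := by
  rw [letter, mul_assoc, Jc_tMat_mul, Jc_mul_tMat]
  push_cast
  ring_nf

lemma letter_inv (lam : ℝ) (m : ℤ) (g : SL2R) :
    (letter lam m g)⁻¹ = letter lam m g⁻¹ := by
  rw [letter, letter, _root_.mul_inv_rev, _root_.mul_inv_rev, tMat_inv, tMat_inv, neg_neg]
  rw [mul_assoc]

lemma letter_zero (lam : ℝ) (g : SL2R) : letter lam 0 g = g := by
  rw [letter]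
  push_cast
  rw [zero_mul, neg_zero, tMat_zero, one_mul, mul_one]

lemma letter_mul_letter (lam : ℝ) (m : ℤ) (g g' : SL2R) :
    letter lam m g * letter lam m g' = letter lam m (g * g') := by
  have h1 : ∀ x : SL2R, tMat (-(m * lam)) * (tMat (m * lam) * x) = x := by
    intro x
    rw [← mul_assoc, tMat_mul, neg_add_cancel, tMat_zero, one_mul]
  rw [letter, letter, letter]
  simp only [mul_assoc, h1]

def wordProd (lam : ℝ) (L : List (ℤ × SL2R)) : SL2R :=
  (L.map (fun p => letter lam p.1 p.2)).prod

@[simp] lemma wordProd_nil (lam : ℝ) : wordProd lam [] = 1 := rfl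

@[simp] lemma wordProd_cons (lam : ℝ) (p : ℤ × SL2R) (L : List (ℤ × SL2R)) :
    wordProd lam (p :: L) = letter lam p.1 p.2 * wordProd lam L := by
  rw [wordProd, wordProd, List.map_cons, List.prod_cons]

lemma tMat_mul_letter (lam : ℝ) (k m : ℤ) (g : SL2R) :
    tMat (k * lam) * letter lam m g = letter lam (m + k) g * tMat (k * lam) := by
  have e1 : tMat ((k : ℝ) * lam) * tMat ((m : ℝ) * lam) = tMat (((m + k : ℤ) : ℝ) * lam) := by
    rw [tMat_mul]; congr 1; push_cast; ring
  have e2 : tMat (-(((m + k : ℤ) : ℝ) * lam)) * tMat ((k : ℝ) * lam) = tMat (-((m : ℝ) * lam)) := by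
    rw [tMat_mul]; congr 1; push_cast; ring
  rw [letter, letter]
  simp only [mul_assoc]
  rw [← mul_assoc (tMat ((k : ℝ) * lam)), e1, ← e2]

lemma tMat_mul_wordProd (lam : ℝ) (k : ℤ) (L : List (ℤ × SL2R)) :
    tMat (k * lam) * wordProd lam L
      = wordProd lam (L.map (fun p => (p.1 + k, p.2))) * tMat (k * lam) := by
  induction L with
  | nil => simp
  | cons p L ih =>
      rw [List.map_cons, wordProd_cons, wordProd_cons, ← mul_assoc, tMat_mul_letter,
        mul_assoc, ih, ← mul_assoc]

section StripSection

variable {Γ : Subgroup SL2R} {α β : ℝ}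

lemma disk_strip
    (hstab : ∀ g ∈ Γ, g 1 0 = 0 → IsPMOne g)
    (hbound : ∀ g ∈ Γ, ¬ IsPMOne g → isoSphere g ⊆ {z ∈ UH | α ≤ z.re ∧ z.re ≤ β})
    {g : SL2R} (hg : g ∈ Γ) (hgn : ¬ IsPMOne g)
    {z : ℂ} (hz : 0 < z.im) (hle : ‖Jc g z‖ ≤ 1) :
    α ≤ z.re ∧ z.re ≤ β := by
  have hc : g 1 0 ≠ 0 := fun h => hgn (hstab g hg h)
  set c : ℝ := g 1 0 with hcdef
  set d : ℝ := g 1 1 with hddef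
  set p : ℝ := -d / c with hpdef
  set r : ℝ := 1 / |c| with hrdef
  have habsc : 0 < |c| := abs_pos.mpr hc
  have hr : 0 < r := by
    rw [hrdef]
    positivity
  have hcC : (c : ℂ) ≠ 0 := by exact_mod_cast hc
  have hcp : (c : ℂ) * (p : ℂ) = -(d : ℂ) := by
    rw [hpdef]
    push_cast
    field_simp
  have hfac : ∀ w : ℂ, Jc g w = (c : ℂ) * (w - (p : ℂ)) := by
    intro w
    rw [Jc, mul_sub, hcp, ← hcdef, ← hddef]
    ring
  have key : ∀ θ ∈ Set.Ioo (0 : ℝ) Real.pi,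
      α ≤ p + r * Real.cos θ ∧ p + r * Real.cos θ ≤ β := by
    intro θ hθ
    set w : ℂ := (p : ℂ) + (r : ℂ) * Complex.exp (θ * Complex.I) with hwdef
    have hexp : Complex.exp ((θ : ℂ) * Complex.I)
        = (Real.cos θ : ℂ) + (Real.sin θ : ℂ) * Complex.I := by
      rw [Complex.exp_mul_I, Complex.ofReal_cos, Complex.ofReal_sin]
    have him : w.im = r * Real.sin θ := by
      rw [hwdef, hexp]
      simp [Complex.sin_ofReal_re, Complex.cos_ofReal_re]
    have hre : w.re = p + r * Real.cos θ := by
      rw [hwdef, hexp]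
      simp [Complex.sin_ofReal_re, Complex.cos_ofReal_re]
    have hwUH : w ∈ UH := by
      show 0 < w.im
      rw [him]
      exact mul_pos hr (Real.sin_pos_of_pos_of_lt_pi hθ.1 hθ.2)
    have habs : ‖Jc g w‖ = 1 := by
      have h1 : ‖Jc g w‖ = |c| * r := by
        rw [hfac, hwdef]
        rw [show (p : ℂ) + (r : ℂ) * Complex.exp (θ * Complex.I) - (p : ℂ)
            = (r : ℂ) * Complex.exp ((θ : ℝ) * Complex.I) by ring]
        rw [norm_mul, norm_mul, Complex.norm_exp_ofReal_mul_I,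
          Complex.norm_real, Complex.norm_real, Real.norm_eq_abs, Real.norm_eq_abs, abs_of_pos hr, mul_one]
      rw [h1, hrdef, mul_one_div, div_self (ne_of_gt habsc)]
    have hmem : w ∈ isoSphere g := ⟨hwUH, habs⟩
    obtain ⟨-, h1, h2⟩ := hbound g hg hgn hmem
    rw [hre] at h1 h2
    exact ⟨h1, h2⟩
  have hbp : p + r ≤ β := by
    have tend : Tendsto (fun θ : ℝ => p + r * Real.cos θ) (nhdsWithin 0 (Set.Ioi 0))
        (nhds (p + r)) := by
      have hco : Continuous fun θ : ℝ => p + r * Real.cos θ := by continuity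
      have := (hco.tendsto 0).mono_left (nhdsWithin_le_nhds (s := Set.Ioi (0:ℝ)))
      simpa using this
    refine le_of_tendsto tend ?_
    filter_upwards [Ioo_mem_nhdsGT_of_mem ⟨le_refl (0:ℝ), Real.pi_pos⟩] with θ hθ
    exact (key θ hθ).2
  have hap : α ≤ p - r := by
    have tend : Tendsto (fun θ : ℝ => p + r * Real.cos θ) (nhdsWithin Real.pi (Set.Iio Real.pi))
        (nhds (p - r)) := by
      have hco : Continuous fun θ : ℝ => p + r * Real.cos θ := by continuity
      have := (hco.tendsto Real.pi).mono_left (nhdsWithin_le_nhds (s := Set.Iio Real.pi))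
      simpa [Real.cos_pi, ← sub_eq_add_neg] using this
    refine ge_of_tendsto tend ?_
    filter_upwards [Ioo_mem_nhdsLT_of_mem ⟨Real.pi_pos, le_refl Real.pi⟩] with θ hθ
    exact (key θ hθ).1
  have hzp : ‖z - (p : ℂ)‖ ≤ r := by
    rw [hfac z, norm_mul, Complex.norm_real, Real.norm_eq_abs] at hle
    rw [hrdef, le_div_iff₀ habsc]
    calc ‖z - (p : ℂ)‖ * |c| = |c| * ‖z - (p : ℂ)‖ := mul_comm _ _
      _ ≤ 1 := hle
  have hre2 : |z.re - p| ≤ ‖z - (p : ℂ)‖ := by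
    have := Complex.abs_re_le_norm (z - (p : ℂ))
    simpa using this
  have := abs_le.mp (le_trans hre2 hzp)
  constructor <;> linarith [this.1, this.2]

end StripSection

lemma Jc_one (z : ℂ) : Jc 1 z = 1 := by
  have h10 : (1 : SL2R) 1 0 = 0 := by
    show ((1 : SL2R) : Matrix (Fin 2) (Fin 2) ℝ) 1 0 = 0
    simp
  have h11 : (1 : SL2R) 1 1 = 1 := by
    show ((1 : SL2R) : Matrix (Fin 2) (Fin 2) ℝ) 1 1 = 1
    simp
  rw [Jc, h10, h11]
  simp

lemma letter_one (lam : ℝ) (m : ℤ) : letter lam m 1 = 1 := by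
  rw [letter, mul_one, tMat_mul, add_neg_cancel, tMat_zero]

lemma letter_inv_bound (lam : ℝ) (m : ℤ) (g : SL2R) {u : ℂ} (hu : 0 < u.im)
    (h1 : 1 ≤ ‖Jc (letter lam m g) u‖) :
    ‖Jc (letter lam m g⁻¹) (moeb (letter lam m g) u)‖ ≤ 1 := by
  have hco := Jc_cocycle (letter lam m g⁻¹) (letter lam m g) hu
  rw [letter_mul_letter, inv_mul_cancel, letter_one, Jc_one] at hco
  have habs : ‖Jc (letter lam m g⁻¹) (moeb (letter lam m g) u)‖
      * ‖Jc (letter lam m g) u‖ = 1 := by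
    rw [← norm_mul, ← hco]
    simp
  nlinarith [norm_nonneg (Jc (letter lam m g⁻¹) (moeb (letter lam m g) u))]

section MasterSection

variable {Γ : Subgroup SL2R} {α β lam : ℝ}

lemma letter_strip
    (hstab : ∀ g ∈ Γ, g 1 0 = 0 → IsPMOne g)
    (hbound : ∀ g ∈ Γ, ¬ IsPMOne g → isoSphere g ⊆ {z ∈ UH | α ≤ z.re ∧ z.re ≤ β})
    {g : SL2R} (hg : g ∈ Γ) (hgn : ¬ IsPMOne g) (m : ℤ)
    {z : ℂ} (hz : 0 < z.im) (hle : ‖Jc (letter lam m g) z‖ ≤ 1) :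
    α + m * lam ≤ z.re ∧ z.re ≤ β + m * lam := by
  rw [Jc_letter] at hle
  have hz' : 0 < (z - ((m : ℝ) * lam : ℝ) : ℂ).im := by simpa using hz
  have hre : ((z - ((m : ℝ) * lam : ℝ) : ℂ)).re = z.re - (m : ℝ) * lam := by simp
  have h := disk_strip hstab hbound hg hgn hz' (by
    convert hle using 3
    push_cast
    ring)
  rw [hre] at h
  constructor <;> linarith [h.1, h.2]

lemma strips_disjoint (hαβ : α ≤ β) (hsep : β - α < lam) {m m' : ℤ} (hmm : m ≠ m') {x : ℝ}
    (h1 : α + m * lam ≤ x ∧ x ≤ β + m * lam)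
    (h2 : α + m' * lam ≤ x ∧ x ≤ β + m' * lam) : False := by
  have hlam0 : 0 < lam := by linarith [sub_nonneg.mpr hαβ]
  rcases lt_or_gt_of_ne hmm with hlt | hlt
  · have h0 : (1 : ℤ) ≤ m' - m := by omega
    have h1' : (1 : ℝ) ≤ ((m' - m : ℤ) : ℝ) := by exact_mod_cast h0
    push_cast at h1'
    nlinarith [h1.2, h2.1]
  · have h0 : (1 : ℤ) ≤ m - m' := by omega
    have h1' : (1 : ℝ) ≤ ((m - m' : ℤ) : ℝ) := by exact_mod_cast h0
    push_cast at h1'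
    nlinarith [h1.1, h2.2]

lemma master
    (hstab : ∀ g ∈ Γ, g 1 0 = 0 → IsPMOne g)
    (hbound : ∀ g ∈ Γ, ¬ IsPMOne g → isoSphere g ⊆ {z ∈ UH | α ≤ z.re ∧ z.re ≤ β})
    (hαβ : α ≤ β) (hsep : β - α < lam) :
    ∀ (L : List (ℤ × SL2R)) (m : ℤ) (g : SL2R),
      (∀ p ∈ (m, g) :: L, p.2 ∈ Γ ∧ ¬ IsPMOne p.2) →
      ((m, g) :: L).IsChain (fun p q => p.1 ≠ q.1) →
      ∀ z : ℂ, 0 < z.im →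
        (1 ≤ ‖Jc (wordProd lam ((m, g) :: L)) z‖ →
          ‖Jc (letter lam m g⁻¹) (moeb (wordProd lam ((m, g) :: L)) z)‖ ≤ 1)
        ∧ (L ≠ [] → ‖Jc (wordProd lam ((m, g) :: L)) z‖ ≤ 1 →
          ∃ p ∈ (m, g) :: L, ‖Jc (letter lam p.1 p.2) z‖ < 1) := by
  intro L
  induction L with
  | nil =>
      intro m g hgood hchain z hz
      constructor
      · intro h1
        rw [wordProd_cons, wordProd_nil, mul_one] at h1 ⊢
        exact letter_inv_bound lam m g hz h1
      · intro hne
        exact absurd rfl hne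
  | cons q L' ih =>
      intro m g hgood hchain z hz
      have hq : q.2 ∈ Γ ∧ ¬ IsPMOne q.2 := hgood q (by simp)
      have hg' : g ∈ Γ ∧ ¬ IsPMOne g := hgood (m, g) (by simp)
      have hchain2 := List.isChain_cons_cons.mp (by rwa [show (m,g) :: q :: L' = (m,g) :: q :: L' from rfl] at hchain)
      have hmq : m ≠ q.1 := hchain2.1
      have hgood' : ∀ p ∈ (q.1, q.2) :: L', p.2 ∈ Γ ∧ ¬ IsPMOne p.2 := by
        intro p hp
        exact hgood p (by simp at hp ⊢; tauto)
      have hchain' : ((q.1, q.2) :: L').IsChain (fun p q => p.1 ≠ q.1) := by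
        simpa using hchain2.2
      have IH := ih q.1 q.2 hgood' hchain'
      set w1 : SL2R := wordProd lam ((q.1, q.2) :: L') with hw1def
      have hw1 : wordProd lam ((m, g) :: q :: L') = letter lam m g * w1 := by
        rw [wordProd_cons, hw1def]
      set u : ℂ := moeb w1 z with hudef
      have hu : 0 < u.im := moeb_mem_UH w1 hz
      have hco : ‖Jc (wordProd lam ((m, g) :: q :: L')) z‖
          = ‖Jc (letter lam m g) u‖ * ‖Jc w1 z‖ := by
        rw [hw1, Jc_cocycle _ _ hz, norm_mul]
      have hmoeb : moeb (wordProd lam ((m, g) :: q :: L')) z = moeb (letter lam m g) u := by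
        rw [hw1, moeb_mul _ _ hz]
      by_cases hcase : 1 ≤ ‖Jc w1 z‖
      · have ha := (IH z hz).1 hcase
        have hstripq : α + q.1 * lam ≤ u.re ∧ u.re ≤ β + q.1 * lam := by
          have hq2 : q.2⁻¹ ∈ Γ := inv_mem hq.1
          exact letter_strip hstab hbound hq2 (not_isPMOne_inv hq.2) q.1 hu ha
        have hA : 1 < ‖Jc (letter lam m g) u‖ := by
          by_contra hle
          push_neg at hle
          exact strips_disjoint hαβ hsep hmq
            (letter_strip hstab hbound hg'.1 hg'.2 m hu hle) hstripq
        constructor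
        · intro _
          rw [hmoeb]
          exact letter_inv_bound lam m g hu (le_of_lt hA)
        · intro _ hle
          exfalso
          rw [hco] at hle
          nlinarith [hA, hcase]
      · push_neg at hcase
        constructor
        · intro h1
          rw [hco] at h1
          have habs0 := norm_nonneg (Jc (letter lam m g) u)
          have hA : 1 ≤ ‖Jc (letter lam m g) u‖ := by nlinarith
          rw [hmoeb]
          exact letter_inv_bound lam m g hu hA
        · intro _ _
          rcases eq_or_ne L' [] with rfl | hL'
          · refine ⟨q, by simp, ?_⟩
            have : w1 = letter lam q.1 q.2 := by
              rw [hw1def, wordProd_cons, wordProd_nil, mul_one]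
            rw [← this]
            exact hcase
          · obtain ⟨p, hp, hplt⟩ := (IH z hz).2 (by
              intro h
              exact hL' (by simpa using h)) (le_of_lt hcase)
            refine ⟨p, ?_, hplt⟩
            simp at hp ⊢
            tauto

end MasterSection

section NFSection

variable (Γ : Subgroup SL2R) (lam : ℝ)

def NF (h : SL2R) : Prop :=
  ∃ s : SL2R, ∃ L : List (ℤ × SL2R), ∃ a : ℤ,
    IsPMOne s ∧ (∀ p ∈ L, p.2 ∈ Γ ∧ ¬ IsPMOne p.2) ∧ L.IsChain (fun p q => p.1 ≠ q.1) ∧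
    h = s * wordProd lam L * tMat (a * lam)

variable {Γ lam}

lemma nf_one : NF Γ lam 1 := by
  refine ⟨1, [], 0, isPMOne_one, by simp, by simp, ?_⟩
  push_cast
  rw [zero_mul, tMat_zero, wordProd_nil, mul_one, mul_one]

lemma nf_tMat_mul (k : ℤ) {h : SL2R} (hh : NF Γ lam h) :
    NF Γ lam (tMat (k * lam) * h) := by
  obtain ⟨s, L, a, hs, hgood, hchain, rfl⟩ := hh
  refine ⟨s, L.map (fun p => (p.1 + k, p.2)), a + k, hs, ?_, ?_, ?_⟩
  · intro p hp
    simp only [List.mem_map] at hp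
    obtain ⟨p', hp', rfl⟩ := hp
    exact hgood p' hp'
  · rw [List.isChain_map]
    exact hchain.imp (by intro p q hpq; simpa using hpq)
  · rw [← mul_assoc, ← mul_assoc, ← hs.central (tMat (k * lam)), mul_assoc s,
      tMat_mul_wordProd, ← mul_assoc, mul_assoc _ (tMat ((k:ℝ) * lam)), tMat_mul]
    congr 2
    push_cast
    ring

lemma nf_gamma_mul {x : SL2R} (hx : x ∈ Γ) {h : SL2R} (hh : NF Γ lam h) :
    NF Γ lam (x * h) := by
  obtain ⟨s, L, a, hs, hgood, hchain, rfl⟩ := hh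
  by_cases hxpm : IsPMOne x
  · refine ⟨x * s, L, a, hxpm.mul hs, hgood, hchain, by rw [← mul_assoc, ← mul_assoc]⟩
  · have hmain : x * (s * wordProd lam L * tMat (a * lam))
        = s * (x * wordProd lam L) * tMat (a * lam) := by
      rw [← mul_assoc, ← mul_assoc, ← hs.central x, mul_assoc s x]
    match L with
    | [] =>
        refine ⟨s, [(0, x)], a, hs, by simpa using ⟨hx, hxpm⟩, by simp, ?_⟩
        rw [hmain]
        simp [wordProd_cons, letter_zero, mul_assoc]
    | (m, g) :: L' =>
        rcases eq_or_ne m 0 with rfl | hm0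
        · by_cases hxg : IsPMOne (x * g)
          · refine ⟨s * (x * g), L', a, hs.mul hxg, fun p hp => hgood p (by simp [hp]),
              hchain.tail, ?_⟩
            rw [hmain]
            simp [wordProd_cons, letter_zero, mul_assoc]
          · refine ⟨s, (0, x * g) :: L', a, hs, ?_, ?_, ?_⟩
            · intro p hp
              rcases List.mem_cons.mp hp with rfl | hp'
              · exact ⟨mul_mem hx (hgood (0, g) (by simp)).1, hxg⟩
              · exact hgood p (by simp [hp'])
            · rcases L' with _ | ⟨q, L''⟩
              · simp
              · rw [List.isChain_cons_cons]
                exact ⟨(List.isChain_cons_cons.mp hchain).1, (List.isChain_cons_cons.mp hchain).2⟩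
            · rw [hmain]
              simp [wordProd_cons, letter_zero, mul_assoc]
        · refine ⟨s, (0, x) :: (m, g) :: L', a, hs, ?_, ?_, ?_⟩
          · intro p hp
            rcases List.mem_cons.mp hp with rfl | hp'
            · exact ⟨hx, hxpm⟩
            · exact hgood p hp'
          · rw [List.isChain_cons_cons]
            exact ⟨fun h => hm0 h.symm, hchain⟩
          · rw [hmain]
            simp [wordProd_cons, letter_zero, mul_assoc]

lemma nf_all (h : SL2R) (hh : h ∈ Subgroup.closure ((Γ : Set SL2R) ∪ {tMat lam})) :
    NF Γ lam h := by
  have hmem : h ∈ Submonoid.closure (((Γ : Set SL2R) ∪ {tMat lam}) ∪ ((Γ : Set SL2R) ∪ {tMat lam})⁻¹) := by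
    have := Subgroup.closure_toSubmonoid ((Γ : Set SL2R) ∪ {tMat lam})
    have h2 : h ∈ (Subgroup.closure ((Γ : Set SL2R) ∪ {tMat lam})).toSubmonoid := hh
    rwa [this] at h2
  obtain ⟨l, hl, rfl⟩ := Submonoid.exists_list_of_mem_closure hmem
  clear hh hmem
  induction l with
  | nil => exact nf_one
  | cons y l' ih =>
      have hy := hl y (by simp)
      have hrest : NF Γ lam l'.prod := ih (fun z hz => hl z (by simp [hz]))
      rw [List.prod_cons]
      have hcases : y ∈ Γ ∨ y = tMat lam ∨ y = (tMat lam)⁻¹ := by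
        rcases hy with hy | hy
        · rcases hy with hy | hy
          · exact Or.inl hy
          · exact Or.inr (Or.inl hy)
        · rw [Set.mem_inv] at hy
          rcases hy with hy | hy
          · exact Or.inl (by simpa using inv_mem (Subgroup.inv_mem Γ hy))
          · simp only [Set.mem_singleton_iff] at hy
            right; right
            rw [← hy]
            simp
      rcases hcases with hy' | hy' | hy'
      · exact nf_gamma_mul hy' hrest
      · rw [hy', show tMat lam = tMat (((1:ℤ) : ℝ) * lam) by norm_num]
        exact nf_tMat_mul 1 hrest
      · rw [hy', tMat_inv, show tMat (-lam) = tMat ((((-1):ℤ) : ℝ) * lam) by norm_num]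
        exact nf_tMat_mul (-1) hrest

end NFSection

lemma frontier_inter_open' {X : Type*} [TopologicalSpace X] {A B : Set X} (hB : IsOpen B) :
    frontier (A ∩ B) ∩ B = frontier A ∩ B := by
  have hcl : closure (A ∩ B) ∩ B = closure A ∩ B := by
    apply subset_antisymm
    · exact Set.inter_subset_inter_left _ (closure_mono Set.inter_subset_left)
    · rintro z ⟨hzA, hzB⟩
      refine ⟨?_, hzB⟩
      rw [mem_closure_iff] at hzA ⊢
      intro U hU hzU
      obtain ⟨x, hx1, hx2⟩ := hzA (U ∩ B) (hU.inter hB) ⟨hzU, hzB⟩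
      exact ⟨x, hx1.1, hx2, hx1.2⟩
  have hint : interior (A ∩ B) = interior A ∩ B := by
    rw [interior_inter, hB.interior_eq]
  ext z
  simp only [Set.mem_inter_iff, frontier, Set.mem_diff]
  constructor
  · rintro ⟨⟨h1, h2⟩, hzB⟩
    have hz1 : z ∈ closure A ∩ B := by rw [← hcl]; exact ⟨h1, hzB⟩
    exact ⟨⟨hz1.1, fun hi => h2 (by rw [hint]; exact ⟨hi, hzB⟩)⟩, hzB⟩
  · rintro ⟨⟨h1, h2⟩, hzB⟩
    have hz1 : z ∈ closure (A ∩ B) ∩ B := by rw [hcl]; exact ⟨h1, hzB⟩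
    exact ⟨⟨hz1.1, fun hi => h2 (by rw [hint] at hi; exact hi.1)⟩, hzB⟩

lemma continuous_absJc (g : SL2R) : Continuous fun z : ℂ => ‖Jc g z‖ := by
  apply continuous_norm.comp
  exact (continuous_const.mul continuous_id).add continuous_const

/-- the isometric spheres of `Γ_W` contributing non-trivially to
the boundary of `W` are exactly the relevant isometric spheres of `Γ`. -/
theorem relevant_spheres_of_auxiliary_group
    (Γ : Subgroup SL2R) (hdisc : IsDiscreteSubgroup Γ)
    (hne : ∃ g ∈ Γ, ¬ IsPMOne g)
    (hstab : ∀ g ∈ Γ, g 1 0 = 0 → IsPMOne g)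
    (α β : ℝ) (hαβ : α ≤ β)
    (hbound : ∀ g ∈ Γ, ¬ IsPMOne g → isoSphere g ⊆ {z ∈ UH | α ≤ z.re ∧ z.re ≤ β})
    (α' β' : ℝ) (hα' : α' < α) (hβ' : β < β')
    (lam : ℝ) (hlam : lam = β' - α')
    (W : Set ℂ) (hW : W = commonExt Γ ∩ {z ∈ UH | α' < z.re ∧ z.re < β'})
    (ΓW : Subgroup SL2R) (hΓW : ΓW = Subgroup.closure ((Γ : Set SL2R) ∪ {tMat lam})) :
    ∀ h ∈ ΓW, h 1 0 ≠ 0 →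
      ((isoSphere h ∩ (frontier W ∩ UH)).Nontrivial ↔
        ∃ g ∈ Γ, ¬ IsPMOne g ∧ IsRelevant Γ g ∧ isoSphere h = isoSphere g) := by
  subst hW hΓW
  have hsep : β - α < lam := by rw [hlam]; linarith
  have hlam0 : 0 < lam := by rw [hlam]; linarith
  -- common exterior is inside the upper half-plane
  have hKUH : commonExt Γ ⊆ UH := by
    obtain ⟨g₀, hg₀, hg₀n⟩ := hne
    intro z hz
    have hz' : z ∈ isoExt g₀ := by
      have := Set.mem_iInter₂.mp hz g₀ ⟨hg₀, hg₀n⟩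
      exact this
    exact hz'.1
  set B : Set ℂ := {z : ℂ | α' < z.re ∧ z.re < β'} with hB
  have hBopen : IsOpen B := by
    have : B = Complex.re ⁻¹' (Set.Ioo α' β') := rfl
    rw [this]
    exact isOpen_Ioo.preimage Complex.continuous_re
  have hWeq : commonExt Γ ∩ {z ∈ UH | α' < z.re ∧ z.re < β'} = commonExt Γ ∩ B := by
    ext z
    simp only [Set.mem_inter_iff, Set.mem_setOf_eq, hB]
    exact ⟨fun hh => ⟨hh.1, hh.2.2⟩, fun hh => ⟨hh.1, hKUH hh.1, hh.2⟩⟩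
  set Ws : Set ℂ := commonExt Γ ∩ {z ∈ UH | α' < z.re ∧ z.re < β'} with hWs
  have hfr : frontier Ws ∩ B = frontier (commonExt Γ) ∩ B := by
    rw [hWeq, frontier_inter_open' hBopen]
  have hIg_sub_B : ∀ g ∈ Γ, ¬ IsPMOne g → isoSphere g ⊆ B := by
    intro g hg hgn z hz
    have := hbound g hg hgn hz
    exact ⟨by linarith [this.2.1], by linarith [this.2.2]⟩
  have hTrans : ∀ g ∈ Γ, ¬ IsPMOne g →
      isoSphere g ∩ (frontier Ws ∩ UH) = isoSphere g ∩ (frontier (commonExt Γ) ∩ UH) := by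
    intro g hg hgn
    ext z
    constructor
    · rintro ⟨h1, h2, h3⟩
      have hzB : z ∈ B := hIg_sub_B g hg hgn h1
      have hz2 : z ∈ frontier (commonExt Γ) ∩ B := by rw [← hfr]; exact ⟨h2, hzB⟩
      exact ⟨h1, hz2.1, h3⟩
    · rintro ⟨h1, h2, h3⟩
      have hzB : z ∈ B := hIg_sub_B g hg hgn h1
      have hz2 : z ∈ frontier Ws ∩ B := by rw [hfr]; exact ⟨h2, hzB⟩
      exact ⟨h1, hz2.1, h3⟩
  -- frontier of W is inside the closed strip
  have hclW : closure Ws ⊆ {z : ℂ | α' ≤ z.re ∧ z.re ≤ β'} := by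
    apply closure_minimal
    · rintro z ⟨-, -, h1, h2⟩
      exact ⟨le_of_lt h1, le_of_lt h2⟩
    · exact (isClosed_le continuous_const Complex.continuous_re).inter
        (isClosed_le Complex.continuous_re continuous_const)
  -- frontier of W is exterior-or-boundary for every sphere of Γ
  have hclExt : ∀ g ∈ Γ, ¬ IsPMOne g → closure Ws ⊆ {z : ℂ | 1 ≤ ‖Jc g z‖} := by
    intro g hg hgn
    apply closure_minimal
    · rintro z ⟨hzK, -⟩
      have hz' : z ∈ isoExt g := Set.mem_iInter₂.mp hzK g ⟨hg, hgn⟩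
      exact le_of_lt hz'.2
    · exact isClosed_le continuous_const (continuous_absJc g)
  -- strip kill: a frontier point of W cannot lie in a shifted strip
  have hkill : ∀ k : ℤ, k ≠ 0 → ∀ z : ℂ, z ∈ frontier Ws →
      α ≤ z.re + k * lam → z.re + k * lam ≤ β → False := by
    intro k hk z hzf h1 h2
    have hzc : z ∈ closure Ws := frontier_subset_closure hzf
    have hzs := hclW hzc
    rcases lt_or_gt_of_ne hk with hk' | hk'
    · have h0 : (1 : ℤ) ≤ -k := by omega
      have h1' : (1 : ℝ) ≤ ((-k : ℤ) : ℝ) := by exact_mod_cast h0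
      push_cast at h1'
      have := hzs.2
      rw [hlam] at *
      nlinarith
    · have h0 : (1 : ℤ) ≤ k := by omega
      have h1' : (1 : ℝ) ≤ ((k : ℤ) : ℝ) := by exact_mod_cast h0
      push_cast at h1'
      have := hzs.1
      rw [hlam] at *
      nlinarith
  intro h hh hc
  obtain ⟨s, L, a, hs, hgood, hchain, hrep⟩ := nf_all h hh
  -- |J h z| in terms of the word
  have hJh : ∀ z : ℂ, ‖Jc h z‖
      = ‖Jc (wordProd lam L) (z + ((a : ℝ) * lam : ℝ))‖ := by
    intro z
    rw [hrep, mul_assoc, Jc_pm hs, Jc_mul_tMat]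
  constructor
  · intro hNT
    match L, hrep, hgood, hchain, hJh with
    | [], hrep, hgood, hchain, hJh =>
        exfalso
        apply hc
        rw [hrep, wordProd_nil, mul_one]
        rcases pm_entry_10 hs (tMat ((a : ℝ) * lam)) with he | he <;> rw [he] <;> simp
    | [(m, g)], hrep, hgood, hchain, hJh =>
        have hgΓ : g ∈ Γ ∧ ¬ IsPMOne g := hgood (m, g) (by simp)
        have hJh' : ∀ z : ℂ, ‖Jc h z‖
            = ‖Jc g (z + ((a : ℝ) * lam : ℝ) - (m : ℂ) * (lam : ℂ))‖ := by
          intro z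
          rw [hJh z, wordProd_cons, wordProd_nil, mul_one, Jc_letter]
        rcases eq_or_ne a m with rfl | ham
        · -- the sphere of h is the sphere of g
          have hpt : ∀ z : ℂ, z + ((a : ℝ) * lam : ℝ) - (a : ℂ) * (lam : ℂ) = z := by
            intro z
            push_cast
            ring
          have hsph : isoSphere h = isoSphere g := by
            ext z
            show z ∈ UH ∧ _ ↔ z ∈ UH ∧ _
            rw [show ‖(h 1 0 : ℂ) * z + (h 1 1 : ℂ)‖ = ‖Jc h z‖ from rfl,
              show ‖(g 1 0 : ℂ) * z + (g 1 1 : ℂ)‖ = ‖Jc g z‖ from rfl,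
              hJh' z, hpt z]
          rw [hsph, hTrans g hgΓ.1 hgΓ.2] at hNT
          exact ⟨g, hgΓ.1, hgΓ.2, hNT, hsph⟩
        · exfalso
          obtain ⟨z, hzI, hzF, hzU⟩ := hNT.nonempty
          have habs : ‖Jc g (z + ((a : ℝ) * lam : ℝ) - (m : ℂ) * (lam : ℂ))‖ = 1 := by
            rw [← hJh' z]
            exact hzI.2
          have him : 0 < (z + ((a : ℝ) * lam : ℝ) - (m : ℂ) * (lam : ℂ)).im := by
            simpa using (show 0 < z.im from hzU)
          have hstrip := disk_strip hstab hbound hgΓ.1 hgΓ.2 him (le_of_eq habs)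
          have hre : (z + ((a : ℝ) * lam : ℝ) - (m : ℂ) * (lam : ℂ)).re
              = z.re + ((a - m : ℤ) : ℝ) * lam := by
            push_cast
            simp
            ring
          rw [hre] at hstrip
          exact hkill (a - m) (by omega) z hzF hstrip.1 hstrip.2
    | (m, g) :: q :: L'', hrep, hgood, hchain, hJh =>
        exfalso
        obtain ⟨z, hzI, hzF, hzU⟩ := hNT.nonempty
        have hzUim : 0 < z.im := hzU
        have him : 0 < (z + ((a : ℝ) * lam : ℝ) : ℂ).im := by simpa using hzUim
        have habs : ‖Jc (wordProd lam ((m, g) :: q :: L'')) (z + ((a : ℝ) * lam : ℝ))‖ = 1 := by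
          rw [← hJh z]
          exact hzI.2
        obtain ⟨p, hp, hplt⟩ := (master hstab hbound hαβ hsep (q :: L'') m g hgood hchain
          (z + ((a : ℝ) * lam : ℝ)) him).2 (by simp) (le_of_eq habs)
        have hpΓ := hgood p hp
        rw [Jc_letter] at hplt
        rcases eq_or_ne p.1 a with hpa | hpa
        · have hpt : z + ((a : ℝ) * lam : ℝ) - (p.1 : ℂ) * (lam : ℂ) = z := by
            rw [hpa]
            push_cast
            ring
          rw [hpt] at hplt
          have hge : 1 ≤ ‖Jc p.2 z‖ :=
            hclExt p.2 hpΓ.1 hpΓ.2 (frontier_subset_closure hzF)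
          linarith
        · have hstrip := disk_strip hstab hbound hpΓ.1 hpΓ.2
            (by simpa using hzUim : 0 < (z + ((a : ℝ) * lam : ℝ) - (p.1 : ℂ) * (lam : ℂ)).im)
            (le_of_lt hplt)
          have hre : (z + ((a : ℝ) * lam : ℝ) - (p.1 : ℂ) * (lam : ℂ)).re
              = z.re + ((a - p.1 : ℤ) : ℝ) * lam := by
            push_cast
            simp
            ring
          rw [hre] at hstrip
          exact hkill (a - p.1) (by omega) z hzF hstrip.1 hstrip.2
  · rintro ⟨g, hgΓ, hgn, hrel, hsph⟩
    rw [hsph, hTrans g hgΓ hgn]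
    exact hrel
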